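/- arXiv:2203.13096 — 2 statements merged into one kernel-verified Lean document; each statement's English description precedes it below -/
import Mathlib

section
/- Let (Ω,𝒜,μ) be a σ-finite measure space, 1 ≤ p < ∞, and let (B_n)_{n∈ℕ} be pairwise disjoint measurable sets with Ω = ⋃_{n∈ℕ} B_n, where each B_n is either an atom of μ or a μ-null set. Let (d_n)_{n∈ℕ} be a sequence of scalars with d_n → 0, and let v := Σ_{n∈ℕ} d_n 1_{B_n} ∈ L∞(μ). Then the multiplication operator M_v on L_p(μ) is compact. -/
open MeasureTheory Filter ENNReal

theorem aux_ae_const_real {Ω : Type*} [MeasurableSpace Ω] (ν : Measure Ω) [IsFiniteMeasure ν]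
    (hν : ν Set.univ ≠ 0)
    (hdich : ∀ A, MeasurableSet A → ν A = 0 ∨ ν A = ν Set.univ)
    (h : Ω → ℝ) (hh : Measurable h) : ∃ c : ℝ, ∀ᵐ x ∂ν, h x = c := by
  set S : Set ℝ := {t | ν {x | h x ≤ t} = ν Set.univ} with hS
  have hup : ∀ t ∈ S, ∀ s, t ≤ s → s ∈ S := by
    intro t ht s hts
    refine le_antisymm (measure_mono (Set.subset_univ _)) ?_
    calc ν Set.univ = ν {x | h x ≤ t} := ht.symm
      _ ≤ ν {x | h x ≤ s} := measure_mono (fun x hx => le_trans hx hts)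
  have hmeas : ∀ t : ℝ, MeasurableSet {x | h x ≤ t} := fun t => hh measurableSet_Iic
  have hne : S.Nonempty := by
    by_contra hcon
    have h0 : ∀ k : ℕ, ν {x | h x ≤ (k:ℝ)} = 0 := by
      intro k
      rcases hdich _ (hmeas k) with h'|h'
      · exact h'
      · exact absurd ⟨(k:ℝ), h'⟩ hcon
    have : ν Set.univ = 0 := by
      have hu : (Set.univ : Set Ω) = ⋃ k : ℕ, {x | h x ≤ (k:ℝ)} := by
        ext x; simp only [Set.mem_univ, Set.mem_iUnion, true_iff]
        obtain ⟨k, hk⟩ := exists_nat_ge (h x); exact ⟨k, hk⟩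
      rw [hu]
      exact le_antisymm ((measure_iUnion_le _).trans (by simp [h0])) (zero_le)
    exact hν this
  have hbdd : BddBelow S := by
    by_contra hcon
    have hmem : ∀ k : ℕ, ν {x | h x ≤ -(k:ℝ)} = ν Set.univ := by
      intro k
      rw [not_bddBelow_iff] at hcon
      obtain ⟨t, htS, htk⟩ := hcon (-(k:ℝ))
      exact hup t htS _ htk.le
    have hinter : ⋂ k : ℕ, {x | h x ≤ -(k:ℝ)} = ∅ := by
      ext x; simp only [Set.mem_iInter, Set.mem_empty_iff_false, iff_false, not_forall]
      obtain ⟨k, hk⟩ := exists_nat_gt (-(h x))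
      refine ⟨k, fun hle => ?_⟩; simp only [Set.mem_setOf_eq] at hle; linarith
    have htend := tendsto_measure_iInter_atTop (fun k => (hmeas _).nullMeasurableSet)
      (fun i j hij => Set.setOf_subset_setOf.mpr
        (fun x hx => hx.trans (by exact_mod_cast neg_le_neg (Nat.cast_le.mpr hij))))
      ⟨0, measure_ne_top ν _⟩
    rw [hinter, measure_empty] at htend
    have htend' : Tendsto (fun _ : ℕ => ν Set.univ) atTop (nhds 0) :=
      htend.congr (fun k => hmem k)
    exact hν (tendsto_nhds_unique htend' tendsto_const_nhds).symm
  set c := sInf S with hc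
  have hzero : ∀ t < c, ν {x | h x ≤ t} = 0 := by
    intro t ht
    rcases hdich _ (hmeas t) with h'|h'
    · exact h'
    · exact absurd (csInf_le hbdd h') (not_le.mpr ht)
  have hfull : ∀ t, c < t → ν {x | h x ≤ t} = ν Set.univ := by
    intro t ht
    obtain ⟨s, hsS, hst⟩ := (csInf_lt_iff hbdd hne).mp ht
    exact hup s hsS t hst.le
  refine ⟨c, ?_⟩
  have h1 : ν {x | c < h x} = 0 := by
    have hsub : {x | c < h x} ⊆ ⋃ k : ℕ, {x | h x ≤ c + ((k:ℝ)+1)⁻¹}ᶜ := by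
      intro x hx
      have hpos : (0:ℝ) < h x - c := sub_pos.mpr hx
      obtain ⟨k, hk⟩ := exists_nat_one_div_lt hpos
      rw [one_div] at hk
      simp only [Set.mem_iUnion, Set.mem_compl_iff, Set.mem_setOf_eq, not_le]
      exact ⟨k, by linarith⟩
    refine le_antisymm ((measure_mono hsub).trans ((measure_iUnion_le _).trans ?_)) (zero_le)
    have hz : ∀ k : ℕ, ν {x | h x ≤ c + ((k:ℝ)+1)⁻¹}ᶜ = 0 := by
      intro k
      rw [measure_compl (hmeas _) (measure_ne_top ν _),
        hfull _ (lt_add_of_pos_right c (by positivity)), tsub_self]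
    simp [hz]
  have h2 : ν {x | h x < c} = 0 := by
    have hsub : {x | h x < c} ⊆ ⋃ k : ℕ, {x | h x ≤ c - ((k:ℝ)+1)⁻¹} := by
      intro x hx
      have hpos : (0:ℝ) < c - h x := sub_pos.mpr hx
      obtain ⟨k, hk⟩ := exists_nat_one_div_lt hpos
      rw [one_div] at hk
      simp only [Set.mem_iUnion, Set.mem_setOf_eq]
      exact ⟨k, by linarith⟩
    refine le_antisymm ((measure_mono hsub).trans ((measure_iUnion_le _).trans ?_)) (zero_le)
    have hz : ∀ k : ℕ, ν {x | h x ≤ c - ((k:ℝ)+1)⁻¹} = 0 := fun k => hzero _ (by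
      have : (0:ℝ) < ((k:ℝ)+1)⁻¹ := by positivity
      linarith)
    simp [hz]
  have hsub : {x | h x ≠ c} ⊆ {x | c < h x} ∪ {x | h x < c} := by
    intro x hx; rcases lt_or_gt_of_ne hx with h'|h'
    · exact Or.inr h'
    · exact Or.inl h'
  exact le_antisymm ((measure_mono hsub).trans ((measure_union_le _ _).trans
    (by rw [h1,h2,add_zero]))) (zero_le)

theorem aux_ae_const_K {Ω 𝕜 : Type*} [MeasurableSpace Ω] [RCLike 𝕜] (ν : Measure Ω)
    [IsFiniteMeasure ν] (hν : ν Set.univ ≠ 0)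
    (hdich : ∀ A, MeasurableSet A → ν A = 0 ∨ ν A = ν Set.univ)
    (f : Ω → 𝕜) (hf : AEStronglyMeasurable f ν) : ∃ c : 𝕜, ∀ᵐ x ∂ν, f x = c := by
  set g := hf.mk f with hg
  have hgm : Measurable g := hf.stronglyMeasurable_mk.measurable
  obtain ⟨c₁, hc₁⟩ := aux_ae_const_real ν hν hdich (fun x => RCLike.re (g x))
    (RCLike.measurable_re.comp hgm)
  obtain ⟨c₂, hc₂⟩ := aux_ae_const_real ν hν hdich (fun x => RCLike.im (g x))
    (RCLike.measurable_im.comp hgm)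
  refine ⟨(c₁ : 𝕜) + (c₂ : 𝕜) * RCLike.I, ?_⟩
  filter_upwards [hc₁, hc₂, hf.ae_eq_mk] with x h1 h2 h3
  rw [h3, show hf.mk f x = g x from rfl, ← RCLike.re_add_im (g x), h1, h2]

theorem aux_compact_of_fd {𝕜 X Y : Type*} [RCLike 𝕜] [NormedAddCommGroup X]
    [NormedAddCommGroup Y] [NormedSpace 𝕜 X] [NormedSpace 𝕜 Y]
    (T : X →L[𝕜] Y) (V : Submodule 𝕜 Y) [FiniteDimensional 𝕜 V]
    (h : ∀ x, T x ∈ V) : IsCompactOperator T := by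
  suffices h2 : IsCompactOperator ⇑(T : X →ₗ[𝕜] Y) from h2
  rw [isCompactOperator_iff_isCompact_closure_image_closedBall (T : X →ₗ[𝕜] Y) zero_lt_one]
  have hVclosed : IsClosed (V : Set Y) := V.closed_of_finiteDimensional
  set K := closure (T '' Metric.closedBall 0 1) with hK
  have hKV : K ⊆ (V : Set Y) := by
    rw [hK]
    refine closure_minimal ?_ hVclosed
    rintro y ⟨x, -, rfl⟩; exact h x
  have hKbdd : Bornology.IsBounded K := by
    refine Bornology.IsBounded.closure ?_
    have : ∀ y ∈ T '' Metric.closedBall 0 1, ‖y‖ ≤ ‖T‖ := by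
      rintro y ⟨x, hx, rfl⟩
      calc ‖T x‖ ≤ ‖T‖ * ‖x‖ := T.le_opNorm x
        _ ≤ ‖T‖ * 1 := by
          have hx1 : ‖x‖ ≤ 1 := by simpa [Metric.mem_closedBall, dist_zero_right] using hx
          exact mul_le_mul_of_nonneg_left hx1 T.opNorm_nonneg
        _ = ‖T‖ := mul_one _
    exact (Metric.isBounded_iff_subset_closedBall 0).mpr
      ⟨‖T‖, fun y hy => by simpa [Metric.mem_closedBall, dist_zero_right] using this y hy⟩
  haveI : ProperSpace V := FiniteDimensional.proper 𝕜 V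
  set K' : Set V := Subtype.val ⁻¹' K with hK'
  have hK'c : IsCompact K' := by
    refine Metric.isCompact_of_isClosed_isBounded
      (isClosed_closure.preimage continuous_subtype_val) ?_
    rw [Metric.isBounded_iff_subset_closedBall 0] at hKbdd ⊢
    obtain ⟨r, hr⟩ := hKbdd
    refine ⟨r, fun y hy => ?_⟩
    have := hr hy
    simpa [Metric.mem_closedBall, dist_eq_norm] using this
  have : K = Subtype.val '' K' := by
    rw [hK', Set.image_preimage_eq_inter_range, Subtype.range_coe]
    exact (Set.inter_eq_left.mpr hKV).symm
  rw [show closure (⇑(T : X →ₗ[𝕜] Y) '' Metric.closedBall 0 1) = K from rfl, this]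
  exact hK'c.image continuous_subtype_val

/-- Multiplication by the indicator of a measurable set, as a continuous linear map on Lp. -/
noncomputable def auxIndicatorCLM {Ω 𝕜 : Type*} [MeasurableSpace Ω] [RCLike 𝕜] (μ : Measure Ω)
    (p : ℝ≥0∞) [Fact (1 ≤ p)] (S : Set Ω) (hS : MeasurableSet S) :
    Lp 𝕜 p μ →L[𝕜] Lp 𝕜 p μ :=
  LinearMap.mkContinuous
    { toFun := fun f => ((Lp.memLp f).indicator hS).toLp (S.indicator ⇑f)
      map_add' := fun f g => by
        rw [← MemLp.toLp_add]
        refine MemLp.toLp_congr _ _ ?_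
        filter_upwards [Lp.coeFn_add f g] with x hx
        by_cases hxs : x ∈ S
        · simp only [Set.indicator_of_mem hxs, Pi.add_apply, hx]
        · simp only [Set.indicator_of_notMem hxs, Pi.add_apply,
            Set.indicator_of_notMem hxs, add_zero]
      map_smul' := fun a f => by
        simp only [RingHom.id_apply]
        rw [← MemLp.toLp_const_smul]
        refine MemLp.toLp_congr _ _ ?_
        filter_upwards [Lp.coeFn_smul a f] with x hx
        by_cases hxs : x ∈ S
        · simp only [Set.indicator_of_mem hxs, Pi.smul_apply, hx]
        · simp only [Set.indicator_of_notMem hxs, Pi.smul_apply, smul_zero] }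
    1 (fun f => by
      simp only [LinearMap.coe_mk, AddHom.coe_mk, one_mul]
      rw [Lp.norm_toLp (S.indicator ⇑f) ((Lp.memLp f).indicator hS), Lp.norm_def]
      refine ENNReal.toReal_mono (Lp.eLpNorm_ne_top f) (eLpNorm_indicator_le _))

theorem auxIndicatorCLM_coeFn {Ω 𝕜 : Type*} [MeasurableSpace Ω] [RCLike 𝕜] (μ : Measure Ω)
    (p : ℝ≥0∞) [Fact (1 ≤ p)] (S : Set Ω) (hS : MeasurableSet S) (f : Lp 𝕜 p μ) :
    ⇑(auxIndicatorCLM μ p S hS f) =ᵐ[μ] S.indicator ⇑f := by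
  have e : auxIndicatorCLM μ p S hS f = ((Lp.memLp f).indicator hS).toLp (S.indicator ⇑f) := rfl
  rw [e]
  exact MemLp.coeFn_toLp _

theorem aux_atom_finite {Ω : Type*} [MeasurableSpace Ω] (μ : Measure Ω) [SigmaFinite μ]
    (B : Set Ω)
    (h : MeasurableSet B ∧ 0 < μ B ∧ ∀ B' ⊆ B, MeasurableSet B' → μ B' = 0 ∨ μ B' = μ B) :
    μ B ≠ ∞ := by
  intro hinf
  have h0 : ∀ k, μ (B ∩ spanningSets μ k) = 0 := by
    intro k
    rcases h.2.2 _ Set.inter_subset_left (h.1.inter (measurableSet_spanningSets μ k)) with h'|h'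
    · exact h'
    · exfalso
      have : μ (B ∩ spanningSets μ k) < ∞ :=
        lt_of_le_of_lt (measure_mono Set.inter_subset_right) (measure_spanningSets_lt_top μ k)
      rw [h', hinf] at this; exact lt_irrefl _ this
  have : μ B = 0 := by
    have hB : B = ⋃ k, B ∩ spanningSets μ k := by
      rw [← Set.inter_iUnion, iUnion_spanningSets, Set.inter_univ]
    rw [hB]
    exact le_antisymm ((measure_iUnion_le _).trans (by simp [h0])) (zero_le)
  exact absurd this (ne_of_gt h.2.1)

theorem aux_coeFn_sum {Ω 𝕜 : Type*} [MeasurableSpace Ω] [RCLike 𝕜] {μ : Measure Ω}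
    {p : ℝ≥0∞} [Fact (1 ≤ p)] (s : Finset ℕ) (g : ℕ → Lp 𝕜 p μ) :
    ⇑(∑ n ∈ s, g n) =ᵐ[μ] fun x => ∑ n ∈ s, g n x := by
  classical
  induction s using Finset.induction_on with
  | empty => simp only [Finset.sum_empty]; exact Lp.coeFn_zero 𝕜 p μ
  | insert _ _ hn ih =>
    rename_i a s
    rw [Finset.sum_insert hn]
    filter_upwards [Lp.coeFn_add (g a) (∑ n ∈ s, g n), ih] with x hx1 hx2
    rw [hx1, Finset.sum_insert hn]
    simp only [Pi.add_apply, hx2]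

/-- A measurable set `B` is an atom of `μ`. -/
def IsAtomSet {Ω : Type*} [MeasurableSpace Ω] (μ : Measure Ω) (B : Set Ω) : Prop :=
  MeasurableSet B ∧ 0 < μ B ∧ ∀ B' ⊆ B, MeasurableSet B' → μ B' = 0 ∨ μ B' = μ B

set_option maxHeartbeats 1000000 in
set_option synthInstance.maxHeartbeats 400000 in
theorem stmt8 {Ω : Type*} [MeasurableSpace Ω] {𝕜 : Type*} [RCLike 𝕜]
    (μ : Measure Ω) [SigmaFinite μ]
    (p : ℝ≥0∞) [Fact (1 ≤ p)] (hp : p ≠ ∞)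
    (B : ℕ → Set Ω) (hBmeas : ∀ n, MeasurableSet (B n))
    (hBdisj : Pairwise (Function.onFun Disjoint B)) (hBunion : (⋃ n, B n) = Set.univ)
    (hBatom : ∀ n, IsAtomSet μ (B n) ∨ μ (B n) = 0)
    (d : ℕ → 𝕜) (hd : Filter.Tendsto d Filter.atTop (nhds 0))
    (v : Ω → 𝕜) (hv : ∀ n, ∀ x ∈ B n, v x = d n) (hvL : MemLp v ∞ μ)
    (Mv : Lp 𝕜 p μ →L[𝕜] Lp 𝕜 p μ)
    (hMv : ∀ f : Lp 𝕜 p μ, (Mv f : Ω → 𝕜) =ᵐ[μ] fun x => v x * f x) :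
    IsCompactOperator Mv := by
  classical
  -- each B n has finite measure
  have hfin : ∀ n, μ (B n) ≠ ∞ := by
    intro n
    rcases hBatom n with h|h
    · exact aux_atom_finite μ (B n) h
    · simp [h]
  -- the indicator elements
  set e : ℕ → Lp 𝕜 p μ := fun n => indicatorConstLp p (hBmeas n) (hfin n) (1 : 𝕜) with he
  -- every Lp function is a.e. constant on each B n
  have hconst : ∀ (f : Lp 𝕜 p μ) (n : ℕ), ∃ c : 𝕜, ∀ᵐ x ∂μ, x ∈ B n → f x = c := by
    intro f n
    rcases hBatom n with h|h
    · haveI : IsFiniteMeasure (μ.restrict (B n)) :=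
        ⟨by rw [Measure.restrict_apply_univ]; exact lt_top_iff_ne_top.mpr (hfin n)⟩
      have hν : μ.restrict (B n) Set.univ ≠ 0 := by
        rw [Measure.restrict_apply_univ]; exact (ne_of_gt h.2.1)
      have hdich : ∀ A, MeasurableSet A →
          μ.restrict (B n) A = 0 ∨ μ.restrict (B n) A = μ.restrict (B n) Set.univ := by
        intro A hA
        rw [Measure.restrict_apply hA, Measure.restrict_apply_univ]
        exact h.2.2 _ Set.inter_subset_right (hA.inter (hBmeas n))
      obtain ⟨c, hc⟩ := aux_ae_const_K (μ.restrict (B n)) hν hdich ⇑f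
        ((Lp.aestronglyMeasurable f).restrict)
      exact ⟨c, (ae_restrict_iff' (hBmeas n)).mp hc⟩
    · refine ⟨0, ?_⟩
      have : ∀ᵐ x ∂μ, x ∉ B n := by
        rw [← compl_mem_ae_iff] at h
        filter_upwards [h] with x hx using hx
      filter_upwards [this] with x hx hmem using absurd hmem hx
  -- the truncated operators
  set SN : ℕ → Set Ω := fun N => ⋃ (n : ℕ) (_ : n < N), B n with hSN
  have hSNmeas : ∀ N, MeasurableSet (SN N) := fun N =>
    MeasurableSet.iUnion fun n => MeasurableSet.iUnion fun _ => hBmeas n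
  set T : ℕ → Lp 𝕜 p μ →L[𝕜] Lp 𝕜 p μ :=
    fun N => Mv.comp (auxIndicatorCLM μ p (SN N) (hSNmeas N)) with hT
  -- each T N is compact
  have hTcomp : ∀ N, IsCompactOperator (T N) := by
    intro N
    haveI : FiniteDimensional 𝕜 (Submodule.span 𝕜 (e '' Set.Iio N)) :=
      FiniteDimensional.span_of_finite 𝕜 ((Set.finite_Iio N).image e)
    refine aux_compact_of_fd (T N) (Submodule.span 𝕜 (e '' Set.Iio N)) ?_
    intro f
    set c : ℕ → 𝕜 := fun n => (hconst f n).choose with hcdef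
    have hc : ∀ n, ∀ᵐ x ∂μ, x ∈ B n → f x = c n := fun n => (hconst f n).choose_spec
    have key : T N f = ∑ n ∈ Finset.range N, (d n * c n) • e n := by
      apply Lp.ext
      have h1 := hMv (auxIndicatorCLM μ p (SN N) (hSNmeas N) f)
      have h2 := auxIndicatorCLM_coeFn μ p (SN N) (hSNmeas N) f
      have h3 := aux_coeFn_sum (Finset.range N) (fun n => (d n * c n) • e n)
      have h4 : ∀ᵐ x ∂μ, ∀ n, x ∈ B n → f x = c n := (ae_all_iff).mpr hc
      have h5 : ∀ᵐ x ∂μ, ∀ n : ℕ, (e n) x = (B n).indicator (fun _ => (1:𝕜)) x :=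
        (ae_all_iff).mpr fun n => indicatorConstLp_coeFn
      have h6 : ∀ᵐ x ∂μ, ∀ n : ℕ, ((d n * c n) • e n) x = (d n * c n) • (e n) x :=
        (ae_all_iff).mpr fun n => Lp.coeFn_smul _ _
      filter_upwards [h1, h2, h3, h4, h5, h6] with x hx1 hx2 hx3 hx4 hx5 hx6
      have hxU : x ∈ ⋃ n, B n := hBunion ▸ Set.mem_univ x
      obtain ⟨n₀, hn₀⟩ := Set.mem_iUnion.mp hxU
      have hrhs : (∑ n ∈ Finset.range N, (d n * c n) • e n) x
          = ∑ n ∈ Finset.range N, (d n * c n) * (B n).indicator (fun _ => (1:𝕜)) x := by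
        rw [hx3]
        refine Finset.sum_congr rfl fun n _ => ?_
        rw [hx6 n, hx5 n, smul_eq_mul]
      rw [show ⇑(T N f) x = ⇑(Mv (auxIndicatorCLM μ p (SN N) (hSNmeas N) f)) x from rfl,
        hx1, hx2, hrhs]
      by_cases hlt : n₀ < N
      · have hxS : x ∈ SN N := Set.mem_iUnion.mpr ⟨n₀, Set.mem_iUnion.mpr ⟨hlt, hn₀⟩⟩
        rw [Set.indicator_of_mem hxS, hv n₀ x hn₀, hx4 n₀ hn₀]
        rw [Finset.sum_eq_single n₀]
        · rw [Set.indicator_of_mem hn₀]; ring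
        · intro n hn hne
          have hxn : x ∉ B n := fun hmem =>
            (hBdisj hne).ne_of_mem hmem hn₀ rfl
          rw [Set.indicator_of_notMem hxn, mul_zero]
        · intro hn; exact absurd (Finset.mem_range.mpr hlt) hn
      · have hxS : x ∉ SN N := by
          intro hxS
          obtain ⟨m, hm⟩ := Set.mem_iUnion.mp hxS
          obtain ⟨hmN, hmx⟩ := Set.mem_iUnion.mp hm
          have : m = n₀ := by
            by_contra hne
            exact (hBdisj hne).ne_of_mem hmx hn₀ rfl
          omega
        rw [Set.indicator_of_notMem hxS, mul_zero]
        symm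
        refine Finset.sum_eq_zero fun n hn => ?_
        have hxn : x ∉ B n := by
          intro hmem
          have : n = n₀ := by
            by_contra hne
            exact (hBdisj hne).ne_of_mem hmem hn₀ rfl
          have := Finset.mem_range.mp hn
          omega
        rw [Set.indicator_of_notMem hxn, mul_zero]
    rw [key]
    refine Submodule.sum_mem _ fun n hn => Submodule.smul_mem _ _ ?_
    exact Submodule.subset_span ⟨n, Finset.mem_range.mp hn, rfl⟩
  -- Mv is in the closure of the compact operators
  have hclosed : IsClosed {A : Lp 𝕜 p μ →L[𝕜] Lp 𝕜 p μ | IsCompactOperator A} :=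
    isClosed_setOf_isCompactOperator
  have hmem : Mv ∈ closure {A : Lp 𝕜 p μ →L[𝕜] Lp 𝕜 p μ | IsCompactOperator A} := by
    rw [Metric.mem_closure_iff]
    intro ε hε
    obtain ⟨N, hN⟩ := (Metric.tendsto_atTop.mp hd (ε/2) (by linarith))
    refine ⟨T N, hTcomp N, ?_⟩
    have hnorm : ‖Mv - T N‖ ≤ ε/2 := by
      refine ContinuousLinearMap.opNorm_le_bound _ (by linarith) fun f => ?_
      refine Lp.norm_le_mul_norm_of_ae_le_mul ?_
      have h1 := hMv f
      have h2 := hMv (auxIndicatorCLM μ p (SN N) (hSNmeas N) f)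
      have h3 := auxIndicatorCLM_coeFn μ p (SN N) (hSNmeas N) f
      have h4 := Lp.coeFn_sub (Mv f) (T N f)
      have h5 : ⇑((Mv - T N) f) =ᵐ[μ] ⇑(Mv f - T N f) := by
        rw [ContinuousLinearMap.sub_apply]
      filter_upwards [h1, h2, h3, h4, h5] with x hx1 hx2 hx3 hx4 hx5
      rw [hx5, hx4]
      simp only [Pi.sub_apply]
      rw [hx1, show ⇑(T N f) x = ⇑(Mv (auxIndicatorCLM μ p (SN N) (hSNmeas N) f)) x from rfl,
        hx2, hx3]
      have hxU : x ∈ ⋃ n, B n := hBunion ▸ Set.mem_univ x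
      obtain ⟨n₀, hn₀⟩ := Set.mem_iUnion.mp hxU
      by_cases hlt : n₀ < N
      · have hxS : x ∈ SN N := Set.mem_iUnion.mpr ⟨n₀, Set.mem_iUnion.mpr ⟨hlt, hn₀⟩⟩
        rw [Set.indicator_of_mem hxS, sub_self, norm_zero]
        positivity
      · have hxS : x ∉ SN N := by
          intro hxS
          obtain ⟨m, hm⟩ := Set.mem_iUnion.mp hxS
          obtain ⟨hmN, hmx⟩ := Set.mem_iUnion.mp hm
          have : m = n₀ := by
            by_contra hne
            exact (hBdisj hne).ne_of_mem hmx hn₀ rfl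
          omega
        rw [Set.indicator_of_notMem hxS, mul_zero, sub_zero, hv n₀ x hn₀, norm_mul]
        have hd0 : ‖d n₀‖ ≤ ε/2 := by
          have := hN n₀ (le_of_not_gt hlt)
          rw [dist_zero_right] at this
          linarith
        exact mul_le_mul_of_nonneg_right hd0 (norm_nonneg _)
    calc dist Mv (T N) = ‖Mv - T N‖ := dist_eq_norm _ _
      _ ≤ ε/2 := hnorm
      _ < ε := by linarith
  rw [hclosed.closure_eq] at hmem
  exact hmem
end

section
/- Let (Ω,𝒜,μ) be a σ-finite diffuse measure space and let u ∈ L∞(μ). Then for every compact linear operator K on L_1(μ), one has ‖M_u + K‖ ≥ ‖u‖_∞; consequently the essential norm of the multiplication operator M_u on L_1(μ) equals ‖u‖_∞. -/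
open MeasureTheory Filter ENNReal

/-- A measure is diffuse (nonatomic) if it has no atoms. -/
def IsDiffuse {Ω : Type*} [MeasurableSpace Ω] (μ : Measure Ω) : Prop :=
  ∀ B : Set Ω, ¬ IsAtomSet μ B

lemma diffuse_split {Ω : Type*} [MeasurableSpace Ω] {μ : Measure Ω} (hd : IsDiffuse μ)
    {B : Set Ω} (hB : MeasurableSet B) (h0 : 0 < μ B) :
    ∃ C, C ⊆ B ∧ MeasurableSet C ∧ 0 < μ C ∧ 0 < μ (B \ C) := by
  have h := hd B
  rw [IsAtomSet] at h
  push_neg at h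
  obtain ⟨C, hCB, hCm, hC0, hCne⟩ := h hB h0
  refine ⟨C, hCB, hCm, pos_iff_ne_zero.mpr hC0, ?_⟩
  rw [pos_iff_ne_zero]
  intro hdiff
  apply hCne
  refine le_antisymm (measure_mono hCB) ?_
  calc μ B ≤ μ (B ∩ C) + μ (B \ C) := measure_le_inter_add_diff μ B C
    _ = μ (B ∩ C) := by rw [hdiff, add_zero]
    _ ≤ μ C := measure_mono Set.inter_subset_right

lemma exists_disjoint_seq {Ω : Type*} [MeasurableSpace Ω] {μ : Measure Ω} (hd : IsDiffuse μ)
    {B : Set Ω} (hB : MeasurableSet B) (h0 : 0 < μ B) :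
    ∃ A : ℕ → Set Ω, (∀ n, MeasurableSet (A n)) ∧ (∀ n, A n ⊆ B) ∧
      (∀ n, 0 < μ (A n)) ∧ Pairwise (Function.onFun Disjoint A) := by
  classical
  have step : ∀ c : {C : Set Ω // MeasurableSet C ∧ 0 < μ C ∧ C ⊆ B},
      ∃ D, D ⊆ c.1 ∧ MeasurableSet D ∧ 0 < μ D ∧ 0 < μ (c.1 \ D) :=
    fun c => diffuse_split hd c.2.1 c.2.2.1
  choose D hDsub hDm hD0 hdiff0 using step
  let next : {C : Set Ω // MeasurableSet C ∧ 0 < μ C ∧ C ⊆ B} →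
      {C : Set Ω // MeasurableSet C ∧ 0 < μ C ∧ C ⊆ B} :=
    fun c => ⟨c.1 \ D c, c.2.1.diff (hDm c), hdiff0 c, Set.diff_subset.trans c.2.2.2⟩
  let chain : ℕ → {C : Set Ω // MeasurableSet C ∧ 0 < μ C ∧ C ⊆ B} :=
    fun n => next^[n] ⟨B, hB, h0, subset_rfl⟩
  have hchain : ∀ n, chain (n + 1) = next (chain n) := fun n =>
    Function.iterate_succ_apply' _ _ _
  have hsub : ∀ n, (chain (n + 1)).1 ⊆ (chain n).1 := by
    intro n; rw [hchain]; exact Set.diff_subset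
  have hmono : ∀ m n, m ≤ n → (chain n).1 ⊆ (chain m).1 := by
    intro m n h
    induction h with
    | refl => exact subset_rfl
    | step _ ih => exact (hsub _).trans ih
  have key : ∀ m n, m < n → Disjoint (D (chain m)) (D (chain n)) := by
    intro m n hmn
    have h1 : D (chain n) ⊆ (chain (m + 1)).1 := (hDsub _).trans (hmono _ _ hmn)
    have h2 : Disjoint (D (chain m)) (chain (m + 1)).1 := by
      rw [hchain]; exact Set.disjoint_sdiff_right
    exact h2.mono_right h1
  refine ⟨fun n => D (chain n), fun n => hDm _, fun n => (hDsub _).trans (chain n).2.2.2,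
    fun n => hD0 _, ?_⟩
  intro i j hij
  rcases lt_or_gt_of_ne hij with h | h
  · exact key _ _ h
  · exact (key _ _ h).symm

lemma meas_pos_of_lt_eLpNormTop {Ω : Type*} [MeasurableSpace Ω] {μ : Measure Ω} {𝕜 : Type*}
    [RCLike 𝕜] {v : Ω → 𝕜} {c : ℝ}
    (hc : ENNReal.ofReal c < eLpNorm v ∞ μ) : 0 < μ {x | c < ‖v x‖} := by
  rw [pos_iff_ne_zero]
  intro h0
  have hae : ∀ᵐ x ∂μ, ‖v x‖ ≤ c := by
    rw [ae_iff]
    convert h0 using 2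
    ext x
    simp [not_le]
  have hle : eLpNorm v ∞ μ ≤ ENNReal.ofReal c := by
    rw [eLpNorm_exponent_top]
    exact eLpNormEssSup_le_of_ae_bound hae
  exact absurd (hc.trans_le hle) (lt_irrefl _)

set_option maxHeartbeats 1000000 in
set_option synthInstance.maxHeartbeats 1000000 in
theorem stmt14 {Ω : Type*} [MeasurableSpace Ω] {𝕜 : Type*} [RCLike 𝕜]
    (μ : Measure Ω) [SigmaFinite μ] (hdiffuse : IsDiffuse μ)
    (u : Ω → 𝕜) (hu : MemLp u ∞ μ)
    (Mu : Lp 𝕜 1 μ →L[𝕜] Lp 𝕜 1 μ)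
    (hMu : ∀ f : Lp 𝕜 1 μ, (Mu f : Ω → 𝕜) =ᵐ[μ] fun x => u x * f x) :
    (∀ K : Lp 𝕜 1 μ →L[𝕜] Lp 𝕜 1 μ, IsCompactOperator K →
      ‖Mu + K‖ ≥ (eLpNorm u ∞ μ).toReal) ∧
    sInf {r : ℝ | ∃ K : Lp 𝕜 1 μ →L[𝕜] Lp 𝕜 1 μ, IsCompactOperator K ∧ r = ‖Mu + K‖}
      = (eLpNorm u ∞ μ).toReal := by
  classical
  set M : ℝ := (eLpNorm u ∞ μ).toReal with hMdef
  have hMnonneg : 0 ≤ M := ENNReal.toReal_nonneg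
  have htop : eLpNorm u ∞ μ ≠ ∞ := hu.2.ne
  obtain ⟨v, hvmeas, huv⟩ : ∃ v, StronglyMeasurable v ∧ u =ᵐ[μ] v :=
    ⟨hu.1.mk u, hu.1.stronglyMeasurable_mk, hu.1.ae_eq_mk⟩
  have heq : eLpNorm v ∞ μ = eLpNorm u ∞ μ := (eLpNorm_congr_ae huv).symm
  -- key lower bound
  have key : ∀ K : Lp 𝕜 1 μ →L[𝕜] Lp 𝕜 1 μ, IsCompactOperator K → M ≤ ‖Mu + K‖ := by
    intro K hK
    refine le_of_forall_sub_le ?_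
    intro ε hε
    rcases le_or_gt M ε with hMε | hMε
    · have := norm_nonneg (Mu + K); linarith
    set c : ℝ := M - ε / 2 with hcdef
    have hc0 : 0 < c := by simp only [hcdef]; linarith
    have hMpos : 0 < M := by linarith
    -- the superlevel set has positive measure
    have hcM : ENNReal.ofReal c < eLpNorm v ∞ μ := by
      rw [heq]
      have : eLpNorm u ∞ μ = ENNReal.ofReal M := (ENNReal.ofReal_toReal htop).symm
      rw [this]
      exact (ENNReal.ofReal_lt_ofReal_iff hMpos).mpr (by simp only [hcdef]; linarith)
    have hApos : 0 < μ {x | c < ‖v x‖} := meas_pos_of_lt_eLpNormTop hcM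
    have hAmeas : MeasurableSet {x | c < ‖v x‖} :=
      measurableSet_lt measurable_const hvmeas.measurable.norm
    obtain ⟨t, htmeas, htsub, htpos, htfin⟩ :=
      Measure.exists_subset_measure_lt_top hAmeas hApos
    obtain ⟨S, hSm, hSsub, hSpos, hSdisj⟩ := exists_disjoint_seq hdiffuse htmeas htpos
    have hSfin : ∀ n, μ (S n) ≠ ∞ := fun n =>
      ((measure_mono (hSsub n)).trans_lt htfin).ne
    have hSA : ∀ n, S n ⊆ {x | c < ‖v x‖} := fun n => (hSsub n).trans htsub
    -- normalized indicator functions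
    set tR : ℕ → ℝ := fun n => (μ (S n)).toReal with htR
    have htRpos : ∀ n, 0 < tR n := fun n =>
      ENNReal.toReal_pos (hSpos n).ne' (hSfin n)
    set cS : ℕ → 𝕜 := fun n => ((((tR n)⁻¹ : ℝ) : 𝕜)) with hcK
    set g : ℕ → Lp 𝕜 1 μ := fun n =>
      indicatorConstLp 1 (hSm n) (hSfin n) (cS n) with hg
    have hgnorm : ∀ n, ‖g n‖ = 1 := by
      intro n
      rw [hg]
      rw [norm_indicatorConstLp one_ne_zero ENNReal.one_ne_top]
      simp only [hcK, RCLike.norm_ofReal, ENNReal.toReal_one]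
      rw [abs_of_pos (inv_pos.mpr (htRpos n))]
      simp only [one_div, inv_one, Real.rpow_one]
      exact inv_mul_cancel₀ (htRpos n).ne'
    -- pointwise representation
    have hgrep : ∀ n, ⇑(g n) =ᵐ[μ] (S n).indicator fun _ => cS n := fun n =>
      indicatorConstLp_coeFn
    -- compactness: find n ≠ m with ‖K (g n) - K (g m)‖ < ε/2
    have hcpt : IsCompact (closure ((K : Lp 𝕜 1 μ →ₗ[𝕜] Lp 𝕜 1 μ) '' Metric.closedBall 0 1)) :=
      IsCompactOperator.isCompact_closure_image_closedBall (𝕜₁ := 𝕜) hK 1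
    have hmem : ∀ k, K (g k) ∈ closure ((K : Lp 𝕜 1 μ →ₗ[𝕜] Lp 𝕜 1 μ) '' Metric.closedBall 0 1) := by
      intro k
      apply subset_closure
      exact ⟨g k, by simp [Metric.mem_closedBall, hgnorm k, dist_zero_right], rfl⟩
    obtain ⟨L, _, φ, hφ, hconv⟩ := hcpt.tendsto_subseq hmem
    rw [Metric.tendsto_atTop] at hconv
    obtain ⟨N, hN⟩ := hconv (ε / 4) (by linarith)
    set n : ℕ := φ N with hn
    set m : ℕ := φ (N + 1) with hm
    have hnm : n ≠ m := fun h => by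
      have := hφ.injective h
      omega
    have hKnm : ‖K (g n) - K (g m)‖ < ε / 2 := by
      have h1 := hN N le_rfl
      have h2 := hN (N + 1) (by omega)
      calc ‖K (g n) - K (g m)‖ ≤ dist (K (g n)) L + dist (K (g m)) L := by
            rw [dist_eq_norm, dist_eq_norm]
            have := norm_sub_le_norm_sub_add_norm_sub (K (g n)) L (K (g m))
            rwa [norm_sub_rev L (K (g m))] at this
        _ < ε / 4 + ε / 4 := by
            exact add_lt_add (by simpa [hn, Function.comp] using h1)
              (by simpa [hm, Function.comp] using h2)
        _ = ε / 2 := by ring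
    -- the test function
    set h : Lp 𝕜 1 μ := g n - g m with hh
    set F : Ω → 𝕜 := fun x =>
      (S n).indicator (fun _ => cS n) x - (S m).indicator (fun _ => cS m) x with hF
    have hhrep : ⇑h =ᵐ[μ] F := by
      filter_upwards [Lp.coeFn_sub (g n) (g m), hgrep n, hgrep m] with x h1 h2 h3
      simp only [hF, hh, h1, Pi.sub_apply, h2, h3]
    -- support of F in S n ∪ S m, and |F| = const on each
    have hFzero : ∀ x, x ∉ S n ∪ S m → F x = 0 := by
      intro x hx
      simp only [hF, Set.indicator_apply]
      rw [if_neg (fun hc => hx (Set.mem_union_left _ hc)),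
        if_neg (fun hc => hx (Set.mem_union_right _ hc)), sub_zero]
    -- ‖h‖ ≥ 1
    have hdisjnm : Disjoint (S n) (S m) := hSdisj hnm
    have hFn : ∀ x ∈ S n, F x = cS n := by
      intro x hx
      have hxm : x ∉ S m := fun hc => (hdisjnm.ne_of_mem hx hc) rfl
      simp only [hF, Set.indicator_apply, if_pos hx, if_neg hxm, sub_zero]
    have heLph : eLpNorm (⇑h) 1 μ = eLpNorm F 1 μ := eLpNorm_congr_ae hhrep
    have hone_le : (1 : ℝ≥0∞) ≤ eLpNorm F 1 μ := by
      have hres : eLpNorm F 1 (μ.restrict (S n)) = eLpNorm (fun _ => cS n) 1 (μ.restrict (S n)) := by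
        apply eLpNorm_congr_ae
        rw [Filter.EventuallyEq, ae_restrict_iff' (hSm n)]
        exact ae_of_all _ fun x hx => hFn x hx
      have hμr : μ.restrict (S n) ≠ 0 := by
        intro hc
        have : μ (S n) = 0 := by
          have := congrArg (fun ν : Measure Ω => ν Set.univ) hc
          simpa [Measure.restrict_apply_univ] using this
        exact (hSpos n).ne' this
      have hconst : eLpNorm (fun _ => cS n) 1 (μ.restrict (S n)) = 1 := by
        rw [eLpNorm_const _ one_ne_zero hμr]
        simp only [ENNReal.toReal_one, one_div, inv_one, ENNReal.rpow_one,
          Measure.restrict_apply_univ]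
        rw [← ofReal_norm]
        have : μ (S n) = ENNReal.ofReal (tR n) := (ENNReal.ofReal_toReal (hSfin n)).symm
        rw [this, ← ENNReal.ofReal_mul (norm_nonneg _)]
        have : ‖cS n‖ * tR n = 1 := by
          simp only [hcK, RCLike.norm_ofReal]
          rw [abs_of_pos (inv_pos.mpr (htRpos n))]
          exact inv_mul_cancel₀ (htRpos n).ne'
        rw [this, ENNReal.ofReal_one]
      calc (1 : ℝ≥0∞) = eLpNorm (fun _ => cS n) 1 (μ.restrict (S n)) := hconst.symm
        _ = eLpNorm F 1 (μ.restrict (S n)) := hres.symm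
        _ ≤ eLpNorm F 1 μ := eLpNorm_mono_measure F Measure.restrict_le_self
    have hnorm_h : 1 ≤ ‖h‖ := by
      rw [Lp.norm_def, heLph]
      have := ENNReal.toReal_mono (by rw [← heLph]; exact Lp.eLpNorm_ne_top h) hone_le
      simpa using this
    -- lower bound for ‖Mu h‖
    have hMuh : c * ‖h‖ ≤ ‖Mu h‖ := by
      have hpt : ∀ x, ENNReal.ofReal c * (‖F x‖₊ : ℝ≥0∞) ≤ (‖v x * F x‖₊ : ℝ≥0∞) := by
        intro x
        by_cases hx : x ∈ S n ∪ S m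
        · have hvx : c ≤ ‖v x‖ := by
            rcases hx with hx | hx
            · specialize hSA n; exact (Set.mem_setOf.mp (hSA hx)).le
            · specialize hSA m; exact (Set.mem_setOf.mp (hSA hx)).le
          calc ENNReal.ofReal c * (‖F x‖₊ : ℝ≥0∞)
              ≤ (‖v x‖₊ : ℝ≥0∞) * (‖F x‖₊ : ℝ≥0∞) := by
                apply mul_le_mul_left
                rw [← enorm_eq_nnnorm, ← ofReal_norm]
                exact ENNReal.ofReal_le_ofReal hvx
            _ = (‖v x * F x‖₊ : ℝ≥0∞) := by
                rw [← ENNReal.coe_mul, ← nnnorm_mul]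
        · rw [hFzero x hx]
          simp
      have hineq : ENNReal.ofReal c * eLpNorm F 1 μ ≤ eLpNorm (fun x => v x * F x) 1 μ := by
        rw [eLpNorm_one_eq_lintegral_enorm, eLpNorm_one_eq_lintegral_enorm,
          ← lintegral_const_mul' _ _ ENNReal.ofReal_ne_top]
        exact lintegral_mono hpt
      have hcongr : eLpNorm (fun x => v x * F x) 1 μ = eLpNorm (⇑(Mu h)) 1 μ := by
        apply eLpNorm_congr_ae
        filter_upwards [hMu h, huv, hhrep] with x h1 h2 h3
        rw [h1, ← h2, ← h3]
      rw [Lp.norm_def (Mu h), Lp.norm_def h, heLph]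
      have hfin' : eLpNorm (⇑(Mu h)) 1 μ ≠ ∞ := Lp.eLpNorm_ne_top _
      have := ENNReal.toReal_mono hfin' (hcongr ▸ hineq)
      rwa [ENNReal.toReal_mul, ENNReal.toReal_ofReal hc0.le] at this
    -- K h is small
    have hKh : ‖K h‖ < ε / 2 := by
      rw [hh, map_sub]
      exact hKnm
    -- assemble
    have hlow : ‖Mu h‖ ≤ ‖(Mu + K) h‖ + ‖K h‖ := by
      have heq2 : Mu h = (Mu + K) h - K h := by
        simp [ContinuousLinearMap.add_apply]
      rw [heq2]
      exact norm_sub_le _ _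
    have hup : ‖(Mu + K) h‖ ≤ ‖Mu + K‖ * ‖h‖ := (Mu + K).le_opNorm h
    have hMuh' : (M - ε / 2) * ‖h‖ ≤ ‖Mu h‖ := by rw [← hcdef]; exact hMuh
    nlinarith [hMuh', hlow, hup, hKh, hnorm_h, norm_nonneg (Mu + K), hε,
      mul_le_mul_of_nonneg_left hnorm_h (norm_nonneg (Mu + K)),
      mul_le_mul_of_nonneg_left hnorm_h hε.le]
  -- upper bound for the norm of Mu
  have hMu_le : ‖Mu‖ ≤ M := by
    refine Mu.opNorm_le_bound hMnonneg fun f => ?_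
    have h1 : eLpNorm (⇑(Mu f)) 1 μ = eLpNorm (fun x => u x * f x) 1 μ :=
      eLpNorm_congr_ae (hMu f)
    have h2 : eLpNorm (fun x => u x * f x) 1 μ ≤ eLpNorm u ∞ μ * eLpNorm (⇑f) 1 μ := by
      simpa [Pi.smul_apply', Pi.smul_apply, smul_eq_mul, Pi.mul_def] using
        eLpNorm_smul_le_eLpNorm_top_mul_eLpNorm (μ := μ) 1 (Lp.aestronglyMeasurable f) u
    rw [Lp.norm_def, Lp.norm_def, h1]
    have hfin2 : eLpNorm u ∞ μ * eLpNorm (⇑f) 1 μ ≠ ∞ :=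
      ENNReal.mul_ne_top htop (Lp.eLpNorm_ne_top f)
    have := ENNReal.toReal_mono hfin2 h2
    rwa [ENNReal.toReal_mul] at this
  refine ⟨fun K hK => key K hK, ?_⟩
  have hmem : ‖Mu‖ ∈ {r : ℝ | ∃ K : Lp 𝕜 1 μ →L[𝕜] Lp 𝕜 1 μ,
      IsCompactOperator K ∧ r = ‖Mu + K‖} :=
    ⟨0, isCompactOperator_zero, by simp⟩
  have hbdd : BddBelow {r : ℝ | ∃ K : Lp 𝕜 1 μ →L[𝕜] Lp 𝕜 1 μ,
      IsCompactOperator K ∧ r = ‖Mu + K‖} := by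
    refine ⟨M, ?_⟩
    rintro r ⟨K, hK, rfl⟩
    exact key K hK
  refine le_antisymm ((csInf_le hbdd hmem).trans hMu_le) ?_
  refine le_csInf ⟨‖Mu‖, hmem⟩ ?_
  rintro r ⟨K, hK, rfl⟩
  exact key K hK
end
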